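/- arXiv:0912.5477 — 4 statements merged into one kernel-verified Lean document; each statement's English description precedes it below -/
import Mathlib

section
/- Let 0 < q < 1 be real, x ∈ ℝ, n ∈ ℕ. Define [x]_q = (1-q^x)/(1-q), E_{n,q}(x) = (1+q)(1-q)^{-n} ∑_{l=0}^n C(n,l)(-1)^l q^{lx}/(1+q^l), and E_{l,q} = E_{l,q}(0). Then E_{n,q}(x) = ∑_{l=0}^n C(n,l) q^{l x} [x]_q^{n-l} E_{l,q}. -/
/-- The `q`-Euler polynomial `E_{n,q}(x)` for real `0 < q < 1`. -/
noncomputable def qEulerPoly (q : ℝ) (n : ℕ) (x : ℝ) : ℝ :=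
  (1 + q) * ((1 - q) ^ n)⁻¹ *
    ∑ l ∈ Finset.range (n + 1),
      (n.choose l : ℝ) * (-1) ^ l * Real.rpow q ((l : ℝ) * x) / (1 + q ^ l)

/-- Binomial inner-sum collapse: for `m ≤ n`,
`∑_{l} C(n,l) C(l,m) a^l (1-a)^{n-l} = C(n,m) a^m`. -/
lemma qEuler_inner (a : ℝ) {m n : ℕ} (hmn : m ≤ n) :
    ∑ l ∈ Finset.range (n + 1),
      (n.choose l : ℝ) * (l.choose m : ℝ) * a ^ l * (1 - a) ^ (n - l)
      = (n.choose m : ℝ) * a ^ m := by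
  have hsub : Finset.Icc m n ⊆ Finset.range (n + 1) := by
    intro l hl
    simp only [Finset.mem_Icc] at hl
    simp only [Finset.mem_range]
    omega
  rw [← Finset.sum_subset hsub (by
    intro l hl hlI
    simp only [Finset.mem_range] at hl
    simp only [Finset.mem_Icc] at hlI
    have : l < m := by omega
    rw [Nat.choose_eq_zero_of_lt this]
    simp)]
  rw [← Finset.Ico_add_one_right_eq_Icc, Finset.sum_Ico_eq_sum_range]
  have key : ∀ t ∈ Finset.range (n + 1 - m),
      (n.choose (m + t) : ℝ) * ((m + t).choose m : ℝ) * a ^ (m + t) * (1 - a) ^ (n - (m + t))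
      = (n.choose m : ℝ) * a ^ m * (a ^ t * (1 - a) ^ (n - m - t) * ((n - m).choose t : ℝ)) := by
    intro t ht
    simp only [Finset.mem_range] at ht
    have h1 : m + t ≤ n := by omega
    have h2 : n.choose (m + t) * (m + t).choose m = n.choose m * (n - m).choose (m + t - m) :=
      Nat.choose_mul (Nat.le_add_right m t)
    rw [Nat.add_sub_cancel_left] at h2
    have h3 : n - (m + t) = n - m - t := by omega
    have h2' : ((n.choose (m + t)) : ℝ) * ((m + t).choose m : ℝ)
        = (n.choose m : ℝ) * ((n - m).choose t : ℝ) := by exact_mod_cast h2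
    rw [h3, pow_add, ← mul_assoc, ← mul_assoc, h2']
    ring
  rw [Finset.sum_congr rfl key]
  have hbin : ∑ t ∈ Finset.range (n - m + 1),
      a ^ t * (1 - a) ^ (n - m - t) * ((n - m).choose t : ℝ) = 1 := by
    have h := add_pow a (1 - a) (n - m)
    simp only [add_sub_cancel, one_pow] at h
    rw [← h]
  have hr : n + 1 - m = n - m + 1 := by omega
  rw [hr, ← Finset.mul_sum, hbin, mul_one]

/-- Key combinatorial identity. -/
lemma qEuler_key (a : ℝ) (f : ℕ → ℝ) (n : ℕ) :
    ∑ l ∈ Finset.range (n + 1), (n.choose l : ℝ) * a ^ l * (1 - a) ^ (n - l) *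
      ∑ m ∈ Finset.range (l + 1), (l.choose m : ℝ) * f m
    = ∑ m ∈ Finset.range (n + 1), (n.choose m : ℝ) * a ^ m * f m := by
  have h1 : ∀ l ∈ Finset.range (n + 1),
      (n.choose l : ℝ) * a ^ l * (1 - a) ^ (n - l) *
        ∑ m ∈ Finset.range (l + 1), (l.choose m : ℝ) * f m
      = ∑ m ∈ Finset.range (n + 1),
          (n.choose l : ℝ) * (l.choose m : ℝ) * a ^ l * (1 - a) ^ (n - l) * f m := by
    intro l hl
    simp only [Finset.mem_range] at hl
    rw [Finset.mul_sum]
    rw [Finset.sum_subset (Finset.range_subset_range.2 (by omega : l + 1 ≤ n + 1))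
      (by
        intro m hm hml
        simp only [Finset.mem_range] at hm hml
        rw [Nat.choose_eq_zero_of_lt (show l < m by omega)]
        simp)]
    exact Finset.sum_congr rfl fun m _ => by ring
  rw [Finset.sum_congr rfl h1, Finset.sum_comm]
  refine Finset.sum_congr rfl fun m hm => ?_
  simp only [Finset.mem_range] at hm
  have hmn : m ≤ n := by omega
  calc ∑ l ∈ Finset.range (n + 1),
        (n.choose l : ℝ) * (l.choose m : ℝ) * a ^ l * (1 - a) ^ (n - l) * f m
      = (∑ l ∈ Finset.range (n + 1),
          (n.choose l : ℝ) * (l.choose m : ℝ) * a ^ l * (1 - a) ^ (n - l)) * f m := by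
        rw [Finset.sum_mul]
    _ = (n.choose m : ℝ) * a ^ m * f m := by rw [qEuler_inner a hmn]

theorem qEuler_addition (q : ℝ) (hq0 : 0 < q) (hq1 : q < 1) (x : ℝ) (n : ℕ) :
    qEulerPoly q n x
      = ∑ l ∈ Finset.range (n + 1),
          (n.choose l : ℝ) * Real.rpow q ((l : ℝ) * x) *
            ((1 - Real.rpow q x) / (1 - q)) ^ (n - l) * qEulerPoly q l 0 := by
  have hq1' : (0:ℝ) < 1 - q := by linarith
  set a := Real.rpow q x with ha
  set f : ℕ → ℝ := fun m => (-1) ^ m / (1 + q ^ m) with hf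
  have rpw : ∀ l : ℕ, Real.rpow q ((l : ℝ) * x) = a ^ l := by
    intro l
    rw [ha, mul_comm]
    rw [show Real.rpow q (x * (l : ℝ)) = (Real.rpow q x) ^ (l : ℝ) from
      Real.rpow_mul hq0.le x (l : ℝ)]
    exact Real.rpow_natCast _ l
  have hRHS : ∀ l ∈ Finset.range (n + 1),
      (n.choose l : ℝ) * Real.rpow q ((l : ℝ) * x) *
          ((1 - a) / (1 - q)) ^ (n - l) * qEulerPoly q l 0
      = (1 + q) * ((1 - q) ^ n)⁻¹ *
          ((n.choose l : ℝ) * a ^ l * (1 - a) ^ (n - l) *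
            ∑ m ∈ Finset.range (l + 1), (l.choose m : ℝ) * f m) := by
    intro l hl
    simp only [Finset.mem_range] at hl
    rw [rpw l]
    unfold qEulerPoly
    have e1 : ∑ m ∈ Finset.range (l + 1),
        (l.choose m : ℝ) * (-1) ^ m * Real.rpow q ((m : ℝ) * 0) / (1 + q ^ m)
        = ∑ m ∈ Finset.range (l + 1), (l.choose m : ℝ) * f m := by
      refine Finset.sum_congr rfl fun m _ => ?_
      have h0 : Real.rpow q 0 = 1 := Real.rpow_zero q
      rw [mul_zero, h0]
      simp only [hf]
      ring
    rw [e1, div_pow]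
    have e2 : ((1 - q) ^ (n - l))⁻¹ * ((1 - q) ^ l)⁻¹ = ((1 - q) ^ n)⁻¹ := by
      rw [← mul_inv, ← pow_add]
      congr 2
      omega
    linear_combination ((n.choose l : ℝ) * a ^ l * (1 - a) ^ (n - l) * (1 + q) *
      ∑ m ∈ Finset.range (l + 1), (l.choose m : ℝ) * f m) * e2
  rw [Finset.sum_congr rfl hRHS, ← Finset.mul_sum, qEuler_key]
  unfold qEulerPoly
  congr 1
  refine Finset.sum_congr rfl fun m _ => ?_
  rw [rpw m]
  simp only [hf]
  ring
end

section
/- Let 0 < q < 1 be real, n ∈ ℕ, r ≥ 1 an integer, f an odd positive integer, x ∈ ℝ. Define E^{(r)}_{n,q}(x) = (1+q)^r (1-q)^{-n} ∑_{l=0}^n C(n,l) (-1)^l q^{l x} (1+q^l)^{-r}. Then the distribution relation holds: E^{(r)}_{n,q}(x) = ((1+q)/(1+q^f))^r [f]_q^n ∑_{a_1,...,a_r=0}^{f-1} (-1)^{a_1+⋯+a_r} E^{(r)}_{n,q^f}((x + a_1 + ⋯ + a_r)/f). -/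
/-- The `q`-Euler polynomial of order `r`, `E^{(r)}_{n,q}(x)`, for real `q`. -/
noncomputable def qEulerHigher (r n : ℕ) (q x : ℝ) : ℝ :=
  (1 + q) ^ r * ((1 - q) ^ n)⁻¹ *
    ∑ l ∈ Finset.range (n + 1),
      (n.choose l : ℝ) * (-1) ^ l * Real.rpow q ((l : ℝ) * x) * ((1 + q ^ l) ^ r)⁻¹

lemma sum_pow_fn (t : ℝ) (r f : ℕ) :
    ∑ a : Fin r → Fin f, t ^ (∑ i, (a i : ℕ)) = (∑ j ∈ Finset.range f, t ^ j) ^ r := by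
  classical
  calc ∑ a : Fin r → Fin f, t ^ (∑ i, (a i : ℕ))
      = ∑ a : Fin r → Fin f, ∏ i, t ^ (a i : ℕ) := by
        refine Finset.sum_congr rfl fun a _ => ?_
        rw [Finset.prod_pow_eq_pow_sum]
    _ = ∏ _i : Fin r, ∑ j : Fin f, t ^ (j : ℕ) := by
        rw [Finset.prod_univ_sum, Fintype.piFinset_univ]
    _ = (∑ j ∈ Finset.range f, t ^ j) ^ r := by
        rw [Finset.prod_const, Finset.card_univ, Fintype.card_fin,
          Fin.sum_univ_eq_sum_range (fun j => t ^ j)]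

theorem qEuler_distribution (q : ℝ) (hq0 : 0 < q) (hq1 : q < 1) (n : ℕ)
    (r : ℕ) (hr : 1 ≤ r) (f : ℕ) (hf : Odd f) (hf1 : 1 ≤ f) (x : ℝ) :
    qEulerHigher r n q x
      = ((1 + q) / (1 + q ^ f)) ^ r * ((1 - q ^ f) / (1 - q)) ^ n *
        ∑ a : Fin r → Fin f,
          (-1) ^ (∑ i, (a i : ℕ)) *
            qEulerHigher r n (q ^ f) ((x + ∑ i, (a i : ℕ)) / f) := by
  have hfR : (f : ℝ) ≠ 0 := Nat.cast_ne_zero.mpr (by omega)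
  have hqne : (1 : ℝ) - q ≠ 0 := by linarith
  have hqfne : (1 : ℝ) - q ^ f ≠ 0 := by
    have := pow_lt_one₀ hq0.le hq1 (by omega : f ≠ 0); linarith
  have hpos : ∀ l : ℕ, (0:ℝ) < 1 + q ^ l := fun l => by positivity
  -- key rpow rewrite
  have key : ∀ (A : ℕ) (l : ℕ),
      Real.rpow (q ^ f) ((l : ℝ) * ((x + A) / f)) =
        Real.rpow q ((l : ℝ) * x) * (q ^ l) ^ A := by
    intro A l
    show (q ^ f : ℝ) ^ ((l : ℝ) * ((x + A) / f)) = q ^ ((l : ℝ) * x) * (q ^ l) ^ A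
    rw [← Real.rpow_natCast q f, ← Real.rpow_mul hq0.le]
    have h1 : (f : ℝ) * ((l : ℝ) * ((x + A) / f)) = (l : ℝ) * x + ((l * A : ℕ) : ℝ) := by
      push_cast; field_simp
    rw [h1, Real.rpow_add hq0, Real.rpow_natCast, pow_mul]
  -- geometric sum
  have hgeom : ∀ l : ℕ, ∑ j ∈ Finset.range f, (-(q ^ l)) ^ j
      = (1 + q ^ (f * l)) / (1 + q ^ l) := by
    intro l
    have hne : -(q ^ l) ≠ 1 := by nlinarith [pow_pos hq0 l]
    rw [geom_sum_eq hne, hf.neg_pow, ← pow_mul,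
      div_eq_div_iff (by nlinarith [pow_pos hq0 (l*f), pow_pos hq0 l]) (hpos l).ne']
    ring_nf
  unfold qEulerHigher
  -- rewrite each a-summand
  have step1 : ∀ a : Fin r → Fin f,
      ((-1:ℝ)) ^ (∑ i, (a i : ℕ)) *
        ((1 + q ^ f) ^ r * ((1 - q ^ f) ^ n)⁻¹ *
          ∑ l ∈ Finset.range (n + 1),
            (n.choose l : ℝ) * (-1) ^ l *
              Real.rpow (q ^ f) ((l : ℝ) * ((x + ∑ i, (a i : ℕ)) / f)) *
              ((1 + (q ^ f) ^ l) ^ r)⁻¹)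
      = (1 + q ^ f) ^ r * ((1 - q ^ f) ^ n)⁻¹ *
          ∑ l ∈ Finset.range (n + 1),
            ((n.choose l : ℝ) * (-1) ^ l * Real.rpow q ((l : ℝ) * x) *
              ((1 + q ^ (f * l)) ^ r)⁻¹) * (-(q ^ l)) ^ (∑ i, (a i : ℕ)) := by
    intro a
    rw [← mul_assoc, mul_comm ((-1:ℝ) ^ (∑ i, (a i : ℕ))) _, mul_assoc]
    congr 1
    rw [Finset.mul_sum]
    refine Finset.sum_congr rfl fun l _ => ?_
    rw [key _ l, ← pow_mul, neg_pow]
    ring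
  rw [Finset.sum_congr rfl fun a _ => step1 a, ← Finset.mul_sum, Finset.sum_comm]
  have step2 : ∀ l : ℕ,
      (∑ a : Fin r → Fin f,
        ((n.choose l : ℝ) * (-1) ^ l * Real.rpow q ((l : ℝ) * x) *
          ((1 + q ^ (f * l)) ^ r)⁻¹) * (-(q ^ l)) ^ (∑ i, (a i : ℕ)))
      = ((n.choose l : ℝ) * (-1) ^ l * Real.rpow q ((l : ℝ) * x) *
          ((1 + q ^ (f * l)) ^ r)⁻¹) * ((1 + q ^ (f * l)) / (1 + q ^ l)) ^ r := by
    intro l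
    rw [← Finset.mul_sum, sum_pow_fn (-(q ^ l)) r f, hgeom l]
  rw [Finset.sum_congr rfl fun l _ => step2 l, ← mul_assoc]
  have hc : ((1 + q) / (1 + q ^ f)) ^ r * ((1 - q ^ f) / (1 - q)) ^ n *
      ((1 + q ^ f) ^ r * ((1 - q ^ f) ^ n)⁻¹) = (1 + q) ^ r * ((1 - q) ^ n)⁻¹ := by
    rw [div_pow, div_pow]
    field_simp
  rw [hc, Finset.mul_sum, Finset.mul_sum]
  refine Finset.sum_congr rfl fun l hl => ?_
  have h1 := (hpos l).ne'
  have h2 := (hpos (f * l)).ne'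
  rw [div_pow]
  field_simp
end

section
/- Let 0 < q < 1 be real, n ∈ ℕ, x > 0 real, and r ≥ 1 an integer. Then the Abel limit lim_{t→1⁻} ∑_{m=0}^∞ C(m+r-1, m) (-1)^m t^m [m+x]_q^n exists and equals (1-q)^{-n} ∑_{l=0}^n C(n,l) (-1)^l q^{l x} (1+q^l)^{-r}, where [y]_q = (1-q^y)/(1-q). -/
open Finset

theorem abel_limit_qEuler (q : ℝ) (hq0 : 0 < q) (hq1 : q < 1) (n : ℕ)
    (x : ℝ) (hx : 0 < x) (r : ℕ) (hr : 1 ≤ r) :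
    Filter.Tendsto
      (fun t : ℝ =>
        ∑' m : ℕ, ((m + r - 1).choose m : ℝ) * (-1) ^ m * t ^ m *
          ((1 - Real.rpow q ((m : ℝ) + x)) / (1 - q)) ^ n)
      (nhdsWithin 1 (Set.Iio 1))
      (nhds (((1 - q) ^ n)⁻¹ *
        ∑ l ∈ Finset.range (n + 1),
          (n.choose l : ℝ) * (-1) ^ l * Real.rpow q ((l : ℝ) * x) *
            ((1 + q ^ l) ^ r)⁻¹)) := by
  obtain ⟨k, rfl⟩ : ∃ k, r = k + 1 := ⟨r - 1, by omega⟩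
  have hrp : ∀ y : ℝ, Real.rpow q y = q ^ y := fun _ => rfl
  simp only [hrp]
  set c : ℕ → ℝ := fun l => ((1 - q) ^ n)⁻¹ * (n.choose l) * (-1) ^ l *
    q ^ ((l : ℝ) * x) with hc
  set g : ℝ → ℝ := fun t => ∑ l ∈ range (n + 1), c l * ((1 + t * q ^ l) ^ (k + 1))⁻¹ with hg
  have hql : ∀ l : ℕ, 0 < q ^ l ∧ q ^ l ≤ 1 := fun l =>
    ⟨pow_pos hq0 l, pow_le_one₀ hq0.le hq1.le⟩
  -- the two functions agree on (0,1)
  have key : ∀ t ∈ Set.Ioo (0 : ℝ) 1,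
      (∑' m : ℕ, ((m + (k + 1) - 1).choose m : ℝ) * (-1) ^ m * t ^ m *
        ((1 - q ^ ((m : ℝ) + x)) / (1 - q)) ^ n) = g t := by
    intro t ht
    obtain ⟨ht0, ht1⟩ := ht
    have hz : ∀ l : ℕ, ‖-(t * q ^ l)‖ < 1 := by
      intro l
      rw [norm_neg, Real.norm_eq_abs, abs_of_pos (mul_pos ht0 (hql l).1)]
      calc t * q ^ l ≤ t * 1 := by nlinarith [(hql l).2, (hql l).1]
        _ < 1 := by linarith
    have hterm : ∀ m : ℕ, ((m + (k + 1) - 1).choose m : ℝ) * (-1) ^ m * t ^ m *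
        ((1 - q ^ ((m : ℝ) + x)) / (1 - q)) ^ n
        = ∑ l ∈ range (n + 1),
            c l * (((m + k).choose k : ℝ) * (-(t * q ^ l)) ^ m) := by
      intro m
      have h1 : m + (k + 1) - 1 = m + k := by omega
      have h2 : ((m + k).choose m : ℝ) = ((m + k).choose k : ℝ) := by
        rw [Nat.choose_symm_add]
      have h3 : q ^ ((m : ℝ) + x) = q ^ m * q ^ x := by
        rw [Real.rpow_add hq0, Real.rpow_natCast]
      rw [h1, h2, h3, div_pow, div_eq_mul_inv]
      have h4 : (1 - q ^ m * q ^ x) ^ n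
          = ∑ l ∈ range (n + 1), (-(q ^ m * q ^ x)) ^ l * (n.choose l : ℝ) := by
        rw [show (1 : ℝ) - q ^ m * q ^ x = -(q ^ m * q ^ x) + 1 by ring,
          add_pow]
        simp
      rw [h4]
      simp only [Finset.sum_mul, Finset.mul_sum]
      refine Finset.sum_congr rfl fun l hl => ?_
      have h5 : q ^ ((l : ℝ) * x) = (q ^ x) ^ l := by
        rw [show ((l : ℝ) * x) = x * (l : ℝ) by ring, Real.rpow_mul hq0.le,
          Real.rpow_natCast]
      rw [hc]
      simp only [h5]
      ring
    rw [tsum_congr hterm]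
    have hsum : ∀ l ∈ range (n + 1), Summable (fun m : ℕ =>
        c l * (((m + k).choose k : ℝ) * (-(t * q ^ l)) ^ m)) := by
      intro l _
      exact (summable_choose_mul_geometric_of_norm_lt_one k (hz l)).mul_left (c l)
    rw [Summable.tsum_finsetSum hsum]
    refine Finset.sum_congr rfl fun l _ => ?_
    rw [tsum_mul_left, tsum_choose_mul_geometric_of_norm_lt_one k (hz l)]
    rw [sub_neg_eq_add, one_div]
  -- eventual equality on the filter
  have hmem : Set.Ioo (0 : ℝ) 1 ∈ nhdsWithin (1 : ℝ) (Set.Iio 1) := by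
    rw [← Set.Ioi_inter_Iio]
    exact Filter.inter_mem (mem_nhdsWithin_of_mem_nhds (Ioi_mem_nhds one_pos))
      self_mem_nhdsWithin
  have heq : (fun t : ℝ =>
      ∑' m : ℕ, ((m + (k + 1) - 1).choose m : ℝ) * (-1) ^ m * t ^ m *
        ((1 - q ^ ((m : ℝ) + x)) / (1 - q)) ^ n) =ᶠ[nhdsWithin 1 (Set.Iio 1)] g :=
    Filter.eventuallyEq_of_mem hmem key
  -- continuity of g at 1
  have hcont : ContinuousAt g 1 := by
    refine tendsto_finset_sum _ fun l _ => ?_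
    apply ContinuousAt.mul continuousAt_const
    apply ContinuousAt.inv₀
    · exact (ContinuousAt.add continuousAt_const
        (continuousAt_id.mul continuousAt_const)).pow _
    · apply pow_ne_zero
      have := (hql l).1
      nlinarith
  have hg1 : g 1 = ((1 - q) ^ n)⁻¹ *
      ∑ l ∈ Finset.range (n + 1),
        (n.choose l : ℝ) * (-1) ^ l * q ^ ((l : ℝ) * x) *
          ((1 + q ^ l) ^ (k + 1))⁻¹ := by
    rw [hg, Finset.mul_sum]
    refine Finset.sum_congr rfl fun l _ => ?_
    rw [hc]
    ring
  refine Filter.Tendsto.congr' heq.symm ?_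
  rw [← hg1]
  exact hcont.continuousWithinAt.tendsto
end

section
/- Let 0 < q < 1 be real, f an odd positive integer, χ : ℤ → ℂ a function periodic with period f, n ∈ ℕ, r ≥ 1 an integer, x ∈ ℝ. Define E^{(r)}_{n,χ,q}(x) = (1+q)^r (1-q)^{-n} ∑_{l=0}^n C(n,l) (-q^x)^l ∑_{a_1,...,a_r=0}^{f-1} (∏_{j=1}^r χ(a_j)) (-q^l)^{a_1+⋯+a_r} (1+q^{lf})^{-r}, and E^{(r)}_{n,q}(y) = (1+q)^r (1-q)^{-n} ∑_{l=0}^n C(n,l)(-1)^l q^{ly}(1+q^l)^{-r}. Then E^{(r)}_{n,χ,q}(x) = [f]_q^n ((1+q)/(1+q^f))^r ∑_{a_1,...,a_r=0}^{f-1} (∏_{j=1}^r χ(a_j)) (-1)^{a_1+⋯+a_r} E^{(r)}_{n,q^f}((x + a_1 + ⋯ + a_r)/f). -/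
lemma rpow_key (q : ℝ) (hq : 0 < q) (f l S : ℕ) (hf : f ≠ 0) (x : ℝ) :
    Real.rpow (q ^ f) ((l : ℝ) * ((x + S) / f)) = (Real.rpow q x) ^ l * q ^ (l * S) := by
  have hf' : (f : ℝ) ≠ 0 := Nat.cast_ne_zero.mpr hf
  show (q ^ f : ℝ) ^ ((l : ℝ) * ((x + S) / f)) = (q ^ x) ^ l * q ^ (l * S)
  rw [← Real.rpow_natCast q (l * S), ← Real.rpow_natCast q f,
    ← Real.rpow_natCast ((q : ℝ) ^ x) l, ← Real.rpow_mul hq.le,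
    ← Real.rpow_mul hq.le, ← Real.rpow_add hq]
  congr 1
  push_cast
  field_simp

/-- The `q`-Euler polynomial of order `r`, `E^{(r)}_{n,q}(y)`, viewed in `ℂ` (real `q`). -/
noncomputable def qEulerHigherC (r n : ℕ) (q y : ℝ) : ℂ :=
  (1 + (q : ℂ)) ^ r * ((1 - (q : ℂ)) ^ n)⁻¹ *
    ∑ l ∈ Finset.range (n + 1),
      (n.choose l : ℂ) * (-1) ^ l * (Real.rpow q ((l : ℝ) * y) : ℂ) *
        ((1 + (q : ℂ) ^ l) ^ r)⁻¹

/-- The generalized `q`-Euler polynomial of order `r` attached to `χ`. -/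
noncomputable def qEulerHigherChi (r n : ℕ) (q : ℝ) (f : ℕ) (χ : ℤ → ℂ) (x : ℝ) : ℂ :=
  (1 + (q : ℂ)) ^ r * ((1 - (q : ℂ)) ^ n)⁻¹ *
    ∑ l ∈ Finset.range (n + 1),
      (n.choose l : ℂ) * (-(Real.rpow q x : ℂ)) ^ l *
        ∑ a : Fin r → Fin f,
          (∏ j, χ (a j)) * (-(q : ℂ) ^ l) ^ (∑ i, (a i : ℕ)) *
            ((1 + (q : ℂ) ^ (l * f)) ^ r)⁻¹

theorem qEuler_chi_distribution (q : ℝ) (hq0 : 0 < q) (hq1 : q < 1)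
    (f : ℕ) (hf : Odd f) (hf1 : 1 ≤ f) (χ : ℤ → ℂ)
    (hχ : ∀ m : ℤ, χ (m + f) = χ m) (n : ℕ) (r : ℕ) (hr : 1 ≤ r) (x : ℝ) :
    qEulerHigherChi r n q f χ x
      = (((1 - q ^ f) / (1 - q) : ℝ) : ℂ) ^ n * ((1 + (q : ℂ)) / (1 + (q : ℂ) ^ f)) ^ r *
        ∑ a : Fin r → Fin f,
          (∏ j, χ (a j)) * (-1) ^ (∑ i, (a i : ℕ)) *
            qEulerHigherC r n (q ^ f) ((x + ∑ i, (a i : ℕ)) / f) := by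
  have hfne : f ≠ 0 := by omega
  have h1r : (1 : ℝ) - q ≠ 0 := by nlinarith
  have h1 : (1 : ℂ) - (q : ℂ) ≠ 0 := by
    have := Complex.ofReal_ne_zero.mpr h1r; push_cast at this; exact this
  have hqf1 : q ^ f < 1 := pow_lt_one₀ hq0.le hq1 hfne
  have h2r : (1 : ℝ) - q ^ f ≠ 0 := by nlinarith
  have h2 : (1 : ℂ) - (q : ℂ) ^ f ≠ 0 := by
    have := Complex.ofReal_ne_zero.mpr h2r; push_cast at this; exact this
  have h3r : (1 : ℝ) + q ^ f ≠ 0 := by positivity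
  have h3 : (1 : ℂ) + (q : ℂ) ^ f ≠ 0 := by
    have := Complex.ofReal_ne_zero.mpr h3r; push_cast at this; exact this
  simp only [qEulerHigherChi, qEulerHigherC, Finset.mul_sum]
  rw [Finset.sum_comm]
  refine Finset.sum_congr rfl fun a _ => ?_
  refine Finset.sum_congr rfl fun l _ => ?_
  set S : ℕ := ∑ i, ((a i : ℕ)) with hS
  rw [rpow_key q hq0 f l S hfne x]
  have h4 : (1 : ℂ) + (q : ℂ) ^ (l * f) ≠ 0 := by
    have h4r : (1 : ℝ) + q ^ (l * f) ≠ 0 := by positivity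
    have := Complex.ofReal_ne_zero.mpr h4r; push_cast at this; exact this
  push_cast
  rw [show ((q : ℂ) ^ f) ^ l = (q : ℂ) ^ (l * f) by rw [← pow_mul, mul_comm]]
  rw [show ((q : ℂ)) ^ (l * S) = ((q : ℂ) ^ l) ^ S by rw [pow_mul]]
  simp only [div_pow]
  field_simp
  ring
end
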